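/- For all real a ≥ 0 and c > 0, the double integral ∫₀¹∫₀¹ exp(−a·(u + v) − c·(u + v − u·v)) du dv equals (e^{−(a+c)²/c}/c) · ∫_a^{a+c} e^{(a+c)·t/c} · (1 − e^{−t})/t dt. -/

import Mathlib

/-- For `a ≥ 0` and `c > 0`,
`∫₀¹∫₀¹ exp (−a (u + v) − c (u + v − u v)) du dv
  = (e^{−(a+c)²/c}/c) · ∫_a^{a+c} e^{(a+c) t/c} (1 − e^{−t})/t dt`. -/
theorem matern_two_points_two_thinnings (a c : ℝ) (ha : 0 ≤ a) (hc : 0 < c) :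
    (∫ u in (0:ℝ)..1, ∫ v in (0:ℝ)..1,
        Real.exp (-a * (u + v) - c * (u + v - u * v))) =
      (Real.exp (-(a + c) ^ 2 / c) / c) *
        ∫ t in a..(a + c), Real.exp ((a + c) * t / c) * (1 - Real.exp (-t)) / t := by
  have hc' : c ≠ 0 := hc.ne'
  set K : ℝ := a + c with hK
  have hstep1 : (∫ u in (0:ℝ)..1, ∫ v in (0:ℝ)..1,
        Real.exp (-a * (u + v) - c * (u + v - u * v)))
      = ∫ u in (0:ℝ)..1, Real.exp (-K ^ 2 / c) *
          (Real.exp (K * (K - c * u) / c) * (1 - Real.exp (-(K - c * u))) / (K - c * u)) := by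
    apply intervalIntegral.integral_congr_ae
    have hne : ∀ᵐ u : ℝ, u ≠ K / c := by
      rw [MeasureTheory.ae_iff]
      simpa [not_not, Set.setOf_eq_eq_singleton] using
        MeasureTheory.measure_singleton (α := ℝ) (K / c)
    filter_upwards [hne] with u hu _
    have hβ : K - c * u ≠ 0 := by
      intro h
      exact hu (by field_simp; linarith [sub_eq_zero.mp h])
    have hinner : ∀ v : ℝ, Real.exp (-a * (u + v) - c * (u + v - u * v))
        = Real.exp (-K * u) * Real.exp (-(K - c * u) * v) := by
      intro v
      rw [← Real.exp_add]
      congr 1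
      simp only [hK]; ring
    rw [intervalIntegral.integral_congr (g := fun v => Real.exp (-K * u) *
        Real.exp (-(K - c * u) * v)) (fun v _ => hinner v),
      intervalIntegral.integral_const_mul]
    have key : ∀ β : ℝ, β ≠ 0 →
        (∫ v in (0:ℝ)..1, Real.exp (-β * v)) = (1 - Real.exp (-β)) / β := by
      intro β hb
      rw [intervalIntegral.integral_comp_mul_left (fun x => Real.exp x)
        (neg_ne_zero.mpr hb), integral_exp]
      simp only [mul_one, mul_zero, Real.exp_zero, smul_eq_mul]
      field_simp
      linear_combination
    have hexpint := key (K - c * u) hβ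
    rw [hexpint]
    have hexp : Real.exp (-K ^ 2 / c) * Real.exp (K * (K - c * u) / c)
        = Real.exp (-K * u) := by
      rw [← Real.exp_add]
      congr 1
      field_simp
      ring
    rw [← hexp]
    ring
  rw [hstep1, intervalIntegral.integral_const_mul,
    intervalIntegral.integral_comp_sub_mul
      (fun t => Real.exp (K * t / c) * (1 - Real.exp (-t)) / t) hc' K]
  have h1 : K - c * 1 = a := by simp [hK]
  have h0 : K - c * 0 = a + c := by simp [hK]
  rw [h1, h0, smul_eq_mul]
  ring
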